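/- Two lines in ℙ³ intersect (equivalently, are coplanar) if and only if the bilinear Plücker pairing of their coordinates vanishes: p₀₁q₂₃ - p₀₂q₁₃ + p₀₃q₁₂ + p₂₃q₀₁ - p₁₃q₀₂ + p₁₂q₀₃ = 0, where p and q are the Plücker coordinates of the two lines. -/

import Mathlib

open Matrix in

/-- Two lines in `ℙ³` (2-dimensional subspaces of `K⁴` spanned by `x, y` and
`z, w`) intersect iff the bilinear Plücker pairing of their coordinates
vanishes: `p₀₁q₂₃ - p₀₂q₁₃ + p₀₃q₁₂ + p₂₃q₀₁ - p₁₃q₀₂ + p₁₂q₀₃ = 0`. -/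
theorem lines_meet_iff_pluecker_pairing_vanishes
    {K : Type*} [Field K] (x y z w : Fin 4 → K)
    (hxy : LinearIndependent K ![x, y])
    (hzw : LinearIndependent K ![z, w]) :
    (Submodule.span K {x, y} ⊓ Submodule.span K {z, w} ≠ ⊥) ↔
      (x 0 * y 1 - x 1 * y 0) * (z 2 * w 3 - z 3 * w 2)
        - (x 0 * y 2 - x 2 * y 0) * (z 1 * w 3 - z 3 * w 1)
        + (x 0 * y 3 - x 3 * y 0) * (z 1 * w 2 - z 2 * w 1)
        + (x 2 * y 3 - x 3 * y 2) * (z 0 * w 1 - z 1 * w 0)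
        - (x 1 * y 3 - x 3 * y 1) * (z 0 * w 2 - z 2 * w 0)
        + (x 1 * y 2 - x 2 * y 1) * (z 0 * w 3 - z 3 * w 0) = 0 := by
  set M : Matrix (Fin 4) (Fin 4) K := Matrix.of ![x, y, z, w] with hM
  -- the Plücker pairing equals the determinant
  have hdet : M.det =
      (x 0 * y 1 - x 1 * y 0) * (z 2 * w 3 - z 3 * w 2)
        - (x 0 * y 2 - x 2 * y 0) * (z 1 * w 3 - z 3 * w 1)
        + (x 0 * y 3 - x 3 * y 0) * (z 1 * w 2 - z 2 * w 1)
        + (x 2 * y 3 - x 3 * y 2) * (z 0 * w 1 - z 1 * w 0)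
        - (x 1 * y 3 - x 3 * y 1) * (z 0 * w 2 - z 2 * w 0)
        + (x 1 * y 2 - x 2 * y 1) * (z 0 * w 3 - z 3 * w 0) := by
    simp [hM, Matrix.det_succ_row_zero, Fin.sum_univ_succ, Fin.succAbove]
    ring
  rw [← hdet]
  -- translate vecMul into a linear combination
  have hvm : ∀ c : Fin 4 → K, c ᵥ* M = c 0 • x + c 1 • y + c 2 • z + c 3 • w := by
    intro c
    funext j
    simp [Matrix.vecMul, dotProduct, Fin.sum_univ_four, hM]
  have hpair : ∀ a b : K, a • x + b • y = 0 → a = 0 ∧ b = 0 := by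
    intro a b hab
    have := Fintype.linearIndependent_iff.mp hxy ![a, b] (by
      simpa [Fin.sum_univ_two] using hab)
    exact ⟨this 0, this 1⟩
  have hpair' : ∀ a b : K, a • z + b • w = 0 → a = 0 ∧ b = 0 := by
    intro a b hab
    have := Fintype.linearIndependent_iff.mp hzw ![a, b] (by
      simpa [Fin.sum_univ_two] using hab)
    exact ⟨this 0, this 1⟩
  constructor
  · intro h
    rw [← Matrix.exists_vecMul_eq_zero_iff]
    obtain ⟨v, hv, hv0⟩ := Submodule.exists_mem_ne_zero_of_ne_bot h
    obtain ⟨hv1, hv2⟩ := Submodule.mem_inf.mp hv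
    obtain ⟨a, b, hab⟩ := Submodule.mem_span_pair.mp hv1
    obtain ⟨c, d, hcd⟩ := Submodule.mem_span_pair.mp hv2
    refine ⟨![a, b, -c, -d], ?_, ?_⟩
    · intro h0
      apply hv0
      have ha : a = 0 := congrFun h0 0
      have hb : b = 0 := congrFun h0 1
      rw [← hab, ha, hb]; simp
    · rw [hvm]
      simp only [Matrix.cons_val_zero, Matrix.cons_val_one, Matrix.head_cons,
        Matrix.cons_val_two, Matrix.cons_val_three, Matrix.tail_cons, neg_smul]
      rw [hab]
      have : c • z + d • w = v := hcd
      rw [← this]; abel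
  · intro h hbot
    obtain ⟨c, hc0, hc⟩ := Matrix.exists_vecMul_eq_zero_iff.mpr h
    rw [hvm] at hc
    set v : Fin 4 → K := c 0 • x + c 1 • y with hv
    have hvmem : v ∈ Submodule.span K {x, y} :=
      Submodule.mem_span_pair.mpr ⟨c 0, c 1, rfl⟩
    rw [add_assoc] at hc
    have hc' : v = -(c 2 • z + c 3 • w) := eq_neg_of_add_eq_zero_left hc
    have hvmem2 : v ∈ Submodule.span K {z, w} := by
      refine Submodule.mem_span_pair.mpr ⟨-c 2, -c 3, ?_⟩
      rw [hc', neg_smul, neg_smul, neg_add]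
    have hvzero : v = 0 := by
      have := Submodule.mem_inf.mpr ⟨hvmem, hvmem2⟩
      rwa [hbot, Submodule.mem_bot] at this
    obtain ⟨h0, h1⟩ := hpair _ _ (by rw [← hv]; exact hvzero)
    have h23 : c 2 • z + c 3 • w = 0 := by
      rw [hvzero, zero_add] at hc; exact hc
    obtain ⟨h2, h3⟩ := hpair' _ _ h23
    apply hc0
    funext i
    fin_cases i <;> assumption
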